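/- Consider a sequential interaction over rounds i = 1, 2, …: contexts x_i are drawn i.i.d. from a distribution Q on a context space X; the action set A is finite with |A| = K; for i ≤ K the learner deterministically plays the i-th action of A regardless of the context, and for i > K the learner chooses a stochastic policy π_i(·|·) : X → Δ(A) measurably with respect to the history H_{i−1} = σ((x_j, a_j, y_j)_{j<i}) and plays a_i ∼ π_i(·|x_i). Let F be a finite set containing an element f*, let u : F × X × A → [0,1], and for each t let f̂^t be an H_{t−1}-measurable element of F. Suppose there are constants L > 0 and nonnegative numbers (E_t)_t such that on an event of probability at least 1 − δ/2 one has, for all t, Σ_{i=1}^{t−1} (u(f̂^t, x_i, a_i) − u(f*, x_i, a_i))² ≤ 2 L² E_t. Then with probability at least 1 − δ, simultaneously for all t > K and all stochastic policies π : X → Δ(A): |E[u(f̂^t, x, a) − u(f*, x, a)]| ≤ √( E[ 1 / Σ_{i=1}^{t−1} 𝟙{a = ã_i} ] ) · √( 68·log(2|F|t³/δ) + 4 L² E_t ), where both expectations are taken over a fresh context x ∼ Q, a fresh action a ∼ π(·|x), and independent counterfactual actions ã_i ∼ π_i(·|x) for i = 1,…,t−1 (with ã_i equal to the deterministically explored action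 for i ≤ K). -/

import Mathlib

open MeasureTheory ProbabilityTheory Function
open scoped MeasureTheory

section Helpers

lemma integrable_of_bdd {α : Type*} {mα : MeasurableSpace α} {μ : Measure α} [IsFiniteMeasure μ]
    {f : α → ℝ} (hf : AEStronglyMeasurable f μ) (C : ℝ) (h : ∀ x, |f x| ≤ C) :
    Integrable f μ :=
  (integrable_const C).mono' hf (Filter.Eventually.of_forall fun x => by
    simpa [Real.norm_eq_abs] using h x)

lemma integral_cs {α : Type*} {mα : MeasurableSpace α} {μ : Measure α}
    {f g : α → ℝ} (hf2 : Integrable (fun x => f x ^ 2) μ)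
    (hg2 : Integrable (fun x => g x ^ 2) μ) (hfg : Integrable (fun x => f x * g x) μ) :
    (∫ x, f x * g x ∂μ) ^ 2 ≤ (∫ x, f x ^ 2 ∂μ) * ∫ x, g x ^ 2 ∂μ := by
  set a := ∫ x, f x ^ 2 ∂μ with ha
  set b := ∫ x, f x * g x ∂μ with hb
  set c := ∫ x, g x ^ 2 ∂μ with hc
  have ha0 : 0 ≤ a := integral_nonneg fun x => sq_nonneg _
  have hc0 : 0 ≤ c := integral_nonneg fun x => sq_nonneg _
  have key : ∀ r : ℝ, 0 ≤ r ^ 2 * a - 2 * r * b + c := by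
    intro r
    have h1 : (fun x => (r * f x - g x) ^ 2)
        = fun x => r ^ 2 * f x ^ 2 - 2 * r * (f x * g x) + g x ^ 2 := by
      funext x; ring
    have h2 : 0 ≤ ∫ x, (r * f x - g x) ^ 2 ∂μ := integral_nonneg fun x => sq_nonneg _
    rw [h1] at h2
    have i1 : Integrable (fun x => r ^ 2 * f x ^ 2) μ := hf2.const_mul _
    have i2 : Integrable (fun x => 2 * r * (f x * g x)) μ := hfg.const_mul _
    have i12 : Integrable (fun x => r ^ 2 * f x ^ 2 - 2 * r * (f x * g x)) μ := i1.sub i2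
    rwa [integral_add i12 hg2, integral_sub i1 i2,
      integral_const_mul, integral_const_mul] at h2
  rcases eq_or_lt_of_le ha0 with ha' | ha'
  · have hb0 : b = 0 := by
      by_contra hb0
      have h1 := key ((c + 1) / (2 * b))
      rw [← ha'] at h1
      have h2 : 2 * ((c + 1) / (2 * b)) * b = c + 1 := by
        field_simp
      nlinarith
    rw [hb0, ← ha']
    nlinarith
  · have h1 := key (b / a)
    have h2 : (b / a) ^ 2 * a - 2 * (b / a) * b + c = c - b ^ 2 / a := by
      field_simp; ring
    rw [h2] at h1
    have h3 : b ^ 2 / a ≤ c := by linarith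
    calc b ^ 2 = (b ^ 2 / a) * a := by field_simp
    _ ≤ c * a := mul_le_mul_of_nonneg_right h3 ha0
    _ = a * c := mul_comm _ _

lemma exp_neg_le_lin {z : ℝ} (h0 : 0 ≤ z) (h1 : z ≤ 1) :
    Real.exp (-z) ≤ 1 - (1 - Real.exp (-1)) * z := by
  have h := convexOn_exp.2 (Set.mem_univ (0 : ℝ)) (Set.mem_univ (-1 : ℝ))
    (by linarith : (0:ℝ) ≤ 1 - z) h0 (by ring)
  simp only [smul_eq_mul, mul_zero, zero_add, Real.exp_zero, mul_one] at h
  have h2 : z * -1 = -z := by ring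
  rw [h2] at h
  linarith

lemma pi_map_eval {ι : Type*} [Fintype ι] [DecidableEq ι] {α : ι → Type*}
    [∀ i, MeasurableSpace (α i)]
    (μ : ∀ i, Measure (α i)) [∀ i, IsProbabilityMeasure (μ i)] (i : ι) :
    Measure.map (Function.eval i) (Measure.pi μ) = μ i := by
  ext s hs
  rw [Measure.map_apply (measurable_pi_apply i) hs, Set.eval_preimage, Measure.pi_pi]
  rw [Finset.prod_eq_single i (fun j _ hj => by simp [Function.update_of_ne hj])
    (by simp)]
  simp

lemma integral_fintype_eq_sum {β : Type*} [Fintype β] [MeasurableSpace β]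
    [MeasurableSingletonClass β] (ν : Measure β) [IsProbabilityMeasure ν] (g : β → ℝ) :
    ∫ b, g b ∂ν = ∑ b, (ν {b}).toReal * g b := by
  rw [integral_fintype .of_finite]
  simp [smul_eq_mul, Measure.real]

lemma sum_toReal_measure_singleton' {β : Type*} [Fintype β] [MeasurableSpace β]
    [MeasurableSingletonClass β] (ν : Measure β) [IsProbabilityMeasure ν] :
    ∑ b, (ν {b}).toReal = 1 := by
  have h := integral_fintype_eq_sum ν (fun _ => (1 : ℝ))
  simpa [integral_const] using h.symm

lemma measurable_integral_fintype_param {α β : Type*} [Fintype β] {mα : MeasurableSpace α}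
    [MeasurableSpace β] [MeasurableSingletonClass β] {κ : α → Measure β}
    (hκp : ∀ a, IsProbabilityMeasure (κ a)) (hκm : Measurable κ)
    {g : α → β → ℝ} (hg : ∀ b, Measurable fun a => g a b) :
    Measurable fun a => ∫ b, g a b ∂(κ a) := by
  have h : (fun a => ∫ b, g a b ∂(κ a)) = fun a => ∑ b, (κ a {b}).toReal * g a b := by
    funext a
    haveI := hκp a
    exact integral_fintype_eq_sum (κ a) (g a)
  rw [h]
  exact Finset.measurable_sum _ fun b _ =>
    (((Measure.measurable_coe (measurableSet_singleton b)).comp hκm).ennreal_toReal).mul (hg b)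

lemma integral_eval_pi {ι : Type*} [Fintype ι] [DecidableEq ι] {β : Type*} [MeasurableSpace β]
    (μs : ι → Measure β) [∀ i, IsProbabilityMeasure (μs i)] (i : ι) {h : β → ℝ}
    (hm : Measurable h) :
    ∫ cf, h (cf i) ∂(Measure.pi μs) = ∫ b, h b ∂(μs i) := by
  rw [← pi_map_eval μs i,
    integral_map (measurable_pi_apply i).aemeasurable hm.aestronglyMeasurable]

lemma sum_Icc_one_eq_range (n : ℕ) (g : ℕ → ℝ) :
    ∑ j ∈ Finset.Icc 1 n, g j = ∑ i ∈ Finset.range n, g (i + 1) := by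
  induction n with
  | zero => simp
  | succ n ih =>
    rw [Finset.sum_range_succ, ← ih, ← Finset.insert_Icc_right_eq_Icc_add_one (by omega),
      Finset.sum_insert (by simp)]
    ring

lemma tsum_rt_le_one : ∑' t : ℕ, (if 2 ≤ t then 1 / (t : ℝ) ^ 3 else 0) ≤ 1 := by
  set rt : ℕ → ℝ := fun t => if 2 ≤ t then 1 / (t : ℝ) ^ 3 else 0 with hrt
  have hnn : ∀ n, 0 ≤ rt n := by
    intro n; simp only [hrt]; positivity
  refine Real.tsum_le_of_sum_range_le hnn ?_
  have key : ∀ n : ℕ, 1 ≤ n → ∑ i ∈ Finset.range n, rt i ≤ 1 - 1 / n := by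
    intro n hn
    induction n with
    | zero => omega
    | succ m ih =>
      rcases Nat.lt_or_ge m 1 with hm | hm
      · interval_cases m
        simp [hrt]
      rcases Nat.lt_or_ge m 2 with hm2 | hm2
      · interval_cases m
        rw [Finset.sum_range_succ]
        norm_num [hrt]
      · have hmr : (2 : ℝ) ≤ (m : ℝ) := by exact_mod_cast hm2
        rw [Finset.sum_range_succ]
        have h1 := ih hm
        have h2 : rt m = 1 / (m : ℝ) ^ 3 := by simp [hrt, hm2]
        rw [h2]
        have hm0 : (0 : ℝ) < m := by linarith
        have hm10 : (0 : ℝ) < (m : ℝ) + 1 := by linarith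
        have hstep : 1 / (m : ℝ) ^ 3 ≤ 1 / (m:ℝ) - 1 / ((m:ℝ) + 1) := by
          rw [div_sub_div _ _ (ne_of_gt hm0) (ne_of_gt hm10)]
          rw [div_le_div_iff₀ (by positivity) (by positivity)]
          ring_nf
          nlinarith
        push_cast
        linarith
  intro n
  rcases Nat.eq_zero_or_pos n with h | h
  · simp [h]
  · have := key n h
    have : (0:ℝ) ≤ 1 / n := by positivity
    linarith [key n h]

end Helpers

set_option maxHeartbeats 3000000 in
theorem stmt3 {Ω : Type*} {mΩ : MeasurableSpace Ω} (μ : Measure Ω) [IsProbabilityMeasure μ]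
    (ℋ : Filtration ℕ mΩ)
    {X : Type*} [MeasurableSpace X] (Q : Measure X) [IsProbabilityMeasure Q]
    {A : Type*} [Fintype A] [DecidableEq A] [MeasurableSpace A] [MeasurableSingletonClass A]
    (K : ℕ) (hKcard : Fintype.card A = K)
    -- `act 1, …, act K` enumerates the action set
    (act : ℕ → A) (henum : ∀ b : A, ∃ i ∈ Finset.Icc 1 K, act i = b)
    (xseq : ℕ → Ω → X) (aseq : ℕ → Ω → A)
    (hxmeas : ∀ i, Measurable (xseq i))
    (hxadapt : ∀ i, Measurable[ℋ i] (xseq i))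
    (haadapt : ∀ i, Measurable[ℋ i] (aseq i))
    -- contexts are i.i.d. from `Q`: each `x_i` has law `Q` and is independent of the past
    (hxlaw : ∀ i, Measure.map (xseq i) μ = Q)
    (hxindep : ∀ i, Indep (MeasurableSpace.comap (xseq i) inferInstance) (ℋ (i - 1)) μ)
    -- the (history-measurable) policies used at each round
    (π : ℕ → Ω → X → Measure A)
    (hπprob : ∀ i ω x, IsProbabilityMeasure (π i ω x))
    (hπmeas : ∀ i, Measurable[(ℋ (i - 1)).prod inferInstance] (Function.uncurry (π i)))
    -- during the first `K` rounds each action is played once, deterministically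
    (hdet : ∀ i ∈ Finset.Icc 1 K, (∀ ω x, π i ω x = Measure.dirac (act i)) ∧
      (∀ ω, aseq i ω = act i))
    -- the action played at round `i` is drawn from `π_i(·|x_i)` with `x_i ∼ Q` fresh:
    (hplay : ∀ i, ∀ h : X → A → ℝ, Measurable (Function.uncurry h) →
      (∃ c : ℝ, ∀ x a, |h x a| ≤ c) →
      μ[(fun ω => h (xseq i ω) (aseq i ω)) | ℋ (i - 1)]
        =ᵐ[μ] fun ω => ∫ x, (∫ a, h x a ∂(π i ω x)) ∂Q)
    {F : Type*} [Fintype F] [Nonempty F] [MeasurableSpace F] [MeasurableSingletonClass F]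
    (fstar : F) (u : F → X → A → ℝ)
    (hu : ∀ q x a, u q x a ∈ Set.Icc (0 : ℝ) 1)
    (humeas : ∀ q, Measurable fun p : X × A => u q p.1 p.2)
    (fhat : ℕ → Ω → F) (hfhat : ∀ t, Measurable[ℋ (t - 1)] (fhat t))
    (L : ℝ) (hL : 0 < L) (Est : ℕ → ℝ) (hEst : ∀ t, 0 ≤ Est t)
    (δ : ℝ) (hδ : δ ∈ Set.Ioo (0 : ℝ) 1)
    -- the offline-oracle guarantee:
    (hkey : ENNReal.ofReal (1 - δ / 2) ≤
      μ {ω | ∀ t : ℕ, ∑ i ∈ Finset.Icc 1 (t - 1),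
          (u (fhat t ω) (xseq i ω) (aseq i ω) - u fstar (xseq i ω) (aseq i ω)) ^ 2 ≤
        2 * L ^ 2 * Est t}) :
    ENNReal.ofReal (1 - δ) ≤
      μ {ω | ∀ t : ℕ, K < t →
        ∀ π' : X → Measure A, Measurable π' → (∀ x, IsProbabilityMeasure (π' x)) →
          |∫ x, (∫ a, (u (fhat t ω) x a - u fstar x a) ∂(π' x)) ∂Q| ≤
            Real.sqrt (∫ x, (∫ a,
                (∫ cf : Fin (t - 1) → A,
                  (1 / ∑ i : Fin (t - 1), if a = cf i then (1 : ℝ) else 0)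
                  ∂(Measure.pi fun i : Fin (t - 1) => π (i.1 + 1) ω x))
                ∂(π' x)) ∂Q)
              * Real.sqrt (68 * Real.log (2 * (Fintype.card F : ℝ) * (t : ℝ) ^ 3 / δ)
                  + 4 * L ^ 2 * Est t)} := by
  classical
  obtain ⟨hδ0, hδ1⟩ := hδ
  have hcard1 : 1 ≤ (Fintype.card F : ℝ) := by exact_mod_cast Fintype.card_pos
  -- the constant c = 1 - e⁻¹
  set c : ℝ := 1 - Real.exp (-1) with hc_def
  have hexp2 : (2 : ℝ) ≤ Real.exp 1 := by
    have := Real.add_one_le_exp (1 : ℝ); linarith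
  have hexphalf : Real.exp (-1) ≤ 1 / 2 := by
    have hmul : Real.exp (-1) * Real.exp 1 = 1 := by
      rw [← Real.exp_add]; norm_num
    nlinarith [Real.exp_pos (-1)]
  have hc_half : 1 / 2 ≤ c := by rw [hc_def]; linarith
  have hc_pos : 0 < c := by linarith
  have hc_le1 : c ≤ 1 := by
    rw [hc_def]; have := Real.exp_pos (-1); linarith
  -- the gap function
  set D : F → X → A → ℝ := fun f x a => u f x a - u fstar x a with hD
  have hDabs : ∀ f x a, |D f x a| ≤ 1 := by
    intro f x a
    obtain ⟨h1, h2⟩ := hu f x a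
    obtain ⟨h3, h4⟩ := hu fstar x a
    rw [hD, abs_le]; constructor <;> simp <;> linarith
  have hDsq1 : ∀ f x a, (D f x a) ^ 2 ≤ 1 := by
    intro f x a
    have := hDabs f x a
    nlinarith [abs_nonneg (D f x a), sq_abs (D f x a)]
  have hDmeas : ∀ f, Measurable fun p : X × A => D f p.1 p.2 :=
    fun f => (humeas f).sub (humeas fstar)
  have hDxmeas : ∀ (f : F) (b : A), Measurable fun x => D f x b :=
    fun f b => (hDmeas f).comp (measurable_id.prodMk measurable_const)
  -- sections of the policies
  have hπsect : ∀ i ω, Measurable fun x => π i ω x := by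
    intro i ω
    exact (hπmeas i).comp (@measurable_prodMk_left Ω X (ℋ (i - 1)) _ ω)
  have hπsect_w : ∀ i ω (b : A), Measurable fun x => (π i ω x {b}).toReal :=
    fun i ω b =>
      ((Measure.measurable_coe (measurableSet_singleton b)).comp (hπsect i ω)).ennreal_toReal
  -- Z and G
  set Z : F → ℕ → Ω → ℝ := fun f i ω => (D f (xseq i ω) (aseq i ω)) ^ 2 with hZ
  set G : F → ℕ → Ω → ℝ := fun f i ω => ∫ x, (∫ a, (D f x a) ^ 2 ∂(π i ω x)) ∂Q with hG
  have hZ0 : ∀ f i ω, 0 ≤ Z f i ω := fun f i ω => sq_nonneg _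
  have hZ1 : ∀ f i ω, Z f i ω ≤ 1 := fun f i ω => hDsq1 f _ _
  have hZmeasH : ∀ f i, Measurable[ℋ i] (Z f i) := fun f i =>
    ((hDmeas f).comp ((hxadapt i).prodMk (haadapt i))).pow_const 2
  have hZmeas : ∀ f i, Measurable (Z f i) := fun f i =>
    (hZmeasH f i).mono (ℋ.le i) le_rfl
  have hGin_meas : ∀ f i ω, Measurable fun x => ∫ a, (D f x a) ^ 2 ∂(π i ω x) := by
    intro f i ω
    exact measurable_integral_fintype_param (fun x => hπprob i ω x) (hπsect i ω)
      (fun b => (hDxmeas f b).pow_const 2)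
  have hGin0 : ∀ f i ω x, 0 ≤ ∫ a, (D f x a) ^ 2 ∂(π i ω x) :=
    fun f i ω x => integral_nonneg fun a => sq_nonneg _
  have hGin1 : ∀ f i ω x, (∫ a, (D f x a) ^ 2 ∂(π i ω x)) ≤ 1 := by
    intro f i ω x
    haveI := hπprob i ω x
    calc ∫ a, (D f x a) ^ 2 ∂(π i ω x) ≤ ∫ _, (1 : ℝ) ∂(π i ω x) :=
          integral_mono .of_finite .of_finite fun a => hDsq1 f x a
    _ = 1 := by simp
  have hGint_inner : ∀ f i ω, Integrable (fun x => ∫ a, (D f x a) ^ 2 ∂(π i ω x)) Q :=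
    fun f i ω => integrable_of_bdd (hGin_meas f i ω).aestronglyMeasurable 1
      (fun x => abs_le.mpr ⟨by linarith [hGin0 f i ω x], hGin1 f i ω x⟩)
  have hG0 : ∀ f i ω, 0 ≤ G f i ω :=
    fun f i ω => integral_nonneg fun x => hGin0 f i ω x
  have hG1 : ∀ f i ω, G f i ω ≤ 1 := by
    intro f i ω
    rw [hG]
    calc ∫ x, (∫ a, (D f x a) ^ 2 ∂(π i ω x)) ∂Q ≤ ∫ _, (1 : ℝ) ∂Q :=
          integral_mono (hGint_inner f i ω) (integrable_const 1) fun x => hGin1 f i ω x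
    _ = 1 := by simp
  have hGmeasH : ∀ f i, Measurable[ℋ (i - 1)] (G f i) := by
    intro f i
    have h1 : Measurable[(ℋ (i - 1)).prod inferInstance]
        (fun p : Ω × X => ∫ a, (D f p.2 a) ^ 2 ∂(π i p.1 p.2)) := by
      refine @measurable_integral_fintype_param (Ω × X) A _ ((ℋ (i - 1)).prod inferInstance) _ _
        (fun p => π i p.1 p.2) (fun p => hπprob i p.1 p.2) (hπmeas i)
        (fun p b => (D f p.2 b) ^ 2) ?_
      intro b
      exact ((hDmeas f).comp (measurable_snd.prodMk measurable_const)).pow_const 2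
    have h2 : StronglyMeasurable[ℋ (i - 1)]
        (fun ω => ∫ x, (∫ a, (D f x a) ^ 2 ∂(π i ω x)) ∂Q) :=
      @MeasureTheory.StronglyMeasurable.integral_prod_right Ω X ℝ (ℋ (i - 1)) _ Q _ _ _
        (fun ω x => ∫ a, (D f x a) ^ 2 ∂(π i ω x))
        h1.stronglyMeasurable
    exact h2.measurable
  have hGmeas : ∀ f i, Measurable (G f i) := fun f i =>
    (hGmeasH f i).mono (ℋ.le (i - 1)) le_rfl
  -- the supermartingale bound
  have hSum_le : ∀ f s ω, (∑ i ∈ Finset.Icc 1 s, (c * G f i ω - Z f i ω)) ≤ s := by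
    intro f s ω
    calc (∑ i ∈ Finset.Icc 1 s, (c * G f i ω - Z f i ω))
        ≤ ∑ i ∈ Finset.Icc 1 s, (1 : ℝ) := by
          refine Finset.sum_le_sum fun i _ => ?_
          have := hG1 f i ω; have := hG0 f i ω; have := hZ0 f i ω
          nlinarith
    _ = s := by simp [Nat.card_Icc]
  have hSummeasH : ∀ f s, Measurable[ℋ s]
      (fun ω => ∑ i ∈ Finset.Icc 1 s, (c * G f i ω - Z f i ω)) := by
    intro f s
    refine Finset.measurable_sum _ fun i hi => ?_
    rw [Finset.mem_Icc] at hi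
    exact ((measurable_const.mul ((hGmeasH f i).mono (ℋ.mono (by omega)) le_rfl)).sub
      ((hZmeasH f i).mono (ℋ.mono (by omega)) le_rfl))
  have hMmeasH : ∀ f s, Measurable[ℋ s]
      (fun ω => Real.exp (∑ i ∈ Finset.Icc 1 s, (c * G f i ω - Z f i ω))) :=
    fun f s => Real.measurable_exp.comp (hSummeasH f s)
  have hMmeas : ∀ f s, Measurable
      (fun ω => Real.exp (∑ i ∈ Finset.Icc 1 s, (c * G f i ω - Z f i ω))) :=
    fun f s => (hMmeasH f s).mono (ℋ.le s) le_rfl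
  have hMint : ∀ f s,
      (∫ ω, Real.exp (∑ i ∈ Finset.Icc 1 s, (c * G f i ω - Z f i ω)) ∂μ) ≤ 1 := by
    intro f s
    induction s with
    | zero =>
      simp [Finset.Icc_eq_empty (by omega : ¬ (1:ℕ) ≤ 0)]
    | succ s ih =>
      set Cf : Ω → ℝ := fun ω =>
        Real.exp (∑ i ∈ Finset.Icc 1 s, (c * G f i ω - Z f i ω)) *
          Real.exp (c * G f (s + 1) ω) with hCf
      set Y : Ω → ℝ := fun ω => Real.exp (-(Z f (s + 1) ω)) with hYdef
      have hsplit : ∀ ω,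
          Real.exp (∑ i ∈ Finset.Icc 1 (s + 1), (c * G f i ω - Z f i ω)) = Cf ω * Y ω := by
        intro ω
        rw [← Finset.insert_Icc_right_eq_Icc_add_one (by omega : 1 ≤ s + 1), Finset.sum_insert (by simp),
          Real.exp_add, sub_eq_add_neg, Real.exp_add, hCf, hYdef]
        ring
      have hGm : Measurable[ℋ s] (G f (s + 1)) := by
        have := hGmeasH f (s + 1)
        simpa [Nat.add_sub_cancel] using this
      have hCmeasH : Measurable[ℋ s] Cf :=
        (Real.measurable_exp.comp (hSummeasH f s)).mul
          (Real.measurable_exp.comp (measurable_const.mul hGm))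
      have hCmeas : Measurable Cf := hCmeasH.mono (ℋ.le s) le_rfl
      have hC0 : ∀ ω, 0 ≤ Cf ω := fun ω =>
        mul_nonneg (Real.exp_pos _).le (Real.exp_pos _).le
      have hCbd : ∀ ω, |Cf ω| ≤ Real.exp (s + 1) := by
        intro ω
        rw [abs_of_nonneg (hC0 ω), hCf]
        dsimp only
        rw [← Real.exp_add]
        apply Real.exp_le_exp.mpr
        have h1 := hSum_le f s ω
        have h2 := hG1 f (s + 1) ω
        have h3 := hG0 f (s + 1) ω
        push_cast
        nlinarith
      have hYmeas : Measurable Y := Real.measurable_exp.comp (hZmeas f (s + 1)).neg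
      have hY0 : ∀ ω, 0 ≤ Y ω := fun ω => (Real.exp_pos _).le
      have hY1 : ∀ ω, Y ω ≤ 1 := fun ω =>
        Real.exp_le_one_iff.mpr (by simpa using hZ0 f (s + 1) ω)
      have hintY : Integrable Y μ := integrable_of_bdd hYmeas.aestronglyMeasurable 1
        (fun ω => abs_le.mpr ⟨by linarith [hY0 ω], hY1 ω⟩)
      have hintCY : Integrable (fun ω => Cf ω * Y ω) μ :=
        integrable_of_bdd (hCmeas.mul hYmeas).aestronglyMeasurable (Real.exp (s + 1))
          (fun ω => by
            rw [abs_mul]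
            calc |Cf ω| * |Y ω| ≤ Real.exp (s + 1) * 1 := by
                  apply mul_le_mul (hCbd ω) (abs_le.mpr ⟨by linarith [hY0 ω], hY1 ω⟩)
                    (abs_nonneg _) (Real.exp_pos _).le
            _ = Real.exp (s + 1) := mul_one _)
      -- the conditional expectation of Y
      have hplay' := hplay (s + 1) (fun x a => Real.exp (-(D f x a) ^ 2))
        (Real.measurable_exp.comp (((hDmeas f).pow_const 2).neg))
        ⟨1, fun x a => by
          rw [abs_of_pos (Real.exp_pos _)]
          exact Real.exp_le_one_iff.mpr (by simpa using sq_nonneg (D f x a))⟩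
      simp only [Nat.add_sub_cancel] at hplay'
      have hplayY : μ[Y|ℋ s] =ᵐ[μ]
          fun ω => ∫ x, (∫ a, Real.exp (-(D f x a) ^ 2) ∂(π (s + 1) ω x)) ∂Q := by
        have hYeq : Y = fun ω =>
            Real.exp (-(D f (xseq (s + 1) ω) (aseq (s + 1) ω)) ^ 2) := by
          funext ω; rw [hYdef, hZ]
        rw [hYeq]
        exact hplay'
      have hpull : μ[fun ω => Cf ω * Y ω|ℋ s] =ᵐ[μ] fun ω => Cf ω * (μ[Y|ℋ s]) ω := by
        have h := condExp_stronglyMeasurable_mul_of_bound (ℋ.le s)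
          hCmeasH.stronglyMeasurable hintY
          (Real.exp (s + 1))
          (Filter.Eventually.of_forall fun ω => by
            simpa [Real.norm_eq_abs] using hCbd ω)
        exact h
      -- pointwise bound for the conditional expectation
      have hcondbd : (fun ω => Cf ω * (μ[Y|ℋ s]) ω) ≤ᵐ[μ]
          fun ω => Real.exp (∑ i ∈ Finset.Icc 1 s, (c * G f i ω - Z f i ω)) := by
        filter_upwards [hplayY] with ω hω
        rw [hω]
        have hst1 : ∀ x, (∫ a, Real.exp (-(D f x a) ^ 2) ∂(π (s + 1) ω x))
            ≤ 1 - c * ∫ a, (D f x a) ^ 2 ∂(π (s + 1) ω x) := by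
          intro x
          haveI := hπprob (s + 1) ω x
          calc (∫ a, Real.exp (-(D f x a) ^ 2) ∂(π (s + 1) ω x))
              ≤ ∫ a, (1 - c * (D f x a) ^ 2) ∂(π (s + 1) ω x) :=
                integral_mono .of_finite .of_finite fun a =>
                  exp_neg_le_lin (sq_nonneg _) (hDsq1 f x a)
          _ = 1 - c * ∫ a, (D f x a) ^ 2 ∂(π (s + 1) ω x) := by
                rw [integral_sub .of_finite .of_finite, integral_const_mul]
                simp
        have hst2 : (∫ x, (∫ a, Real.exp (-(D f x a) ^ 2) ∂(π (s + 1) ω x)) ∂Q)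
            ≤ 1 - c * G f (s + 1) ω := by
          have hmeas1 : Measurable fun x => ∫ a, Real.exp (-(D f x a) ^ 2) ∂(π (s + 1) ω x) :=
            measurable_integral_fintype_param (fun x => hπprob (s + 1) ω x)
              (hπsect (s + 1) ω)
              (fun b => Real.measurable_exp.comp (((hDxmeas f b).pow_const 2).neg))
          have hbd1 : ∀ x, |∫ a, Real.exp (-(D f x a) ^ 2) ∂(π (s + 1) ω x)| ≤ 1 := by
            intro x
            haveI := hπprob (s + 1) ω x
            rw [abs_of_nonneg (integral_nonneg fun a => (Real.exp_pos _).le)]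
            calc (∫ a, Real.exp (-(D f x a) ^ 2) ∂(π (s + 1) ω x))
                ≤ ∫ _, (1 : ℝ) ∂(π (s + 1) ω x) := integral_mono .of_finite .of_finite
                  fun a => Real.exp_le_one_iff.mpr (by simpa using sq_nonneg (D f x a))
            _ = 1 := by simp
          calc (∫ x, (∫ a, Real.exp (-(D f x a) ^ 2) ∂(π (s + 1) ω x)) ∂Q)
              ≤ ∫ x, (1 - c * ∫ a, (D f x a) ^ 2 ∂(π (s + 1) ω x)) ∂Q :=
                integral_mono (integrable_of_bdd hmeas1.aestronglyMeasurable 1 hbd1)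
                  ((integrable_const 1).sub ((hGint_inner f (s + 1) ω).const_mul c))
                  hst1
          _ = 1 - c * G f (s + 1) ω := by
                rw [integral_sub (integrable_const 1) ((hGint_inner f (s + 1) ω).const_mul c),
                  integral_const_mul]
                simp [hG]
        have hst3 : 1 - c * G f (s + 1) ω ≤ Real.exp (-(c * G f (s + 1) ω)) := by
          have := Real.add_one_le_exp (-(c * G f (s + 1) ω))
          linarith
        calc Cf ω * (∫ x, (∫ a, Real.exp (-(D f x a) ^ 2) ∂(π (s + 1) ω x)) ∂Q)
            ≤ Cf ω * Real.exp (-(c * G f (s + 1) ω)) :=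
              mul_le_mul_of_nonneg_left (le_trans hst2 hst3) (hC0 ω)
        _ = Real.exp (∑ i ∈ Finset.Icc 1 s, (c * G f i ω - Z f i ω)) := by
              rw [hCf]
              dsimp only
              rw [mul_assoc, ← Real.exp_add, add_neg_cancel, Real.exp_zero, mul_one]
      have hintCcond : Integrable (fun ω => Cf ω * (μ[Y|ℋ s]) ω) μ :=
        Integrable.bdd_mul integrable_condExp hCmeas.aestronglyMeasurable
          (Filter.Eventually.of_forall fun ω => by
            simpa [Real.norm_eq_abs] using hCbd ω)
      have hintM : Integrable
          (fun ω => Real.exp (∑ i ∈ Finset.Icc 1 s, (c * G f i ω - Z f i ω))) μ :=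
        integrable_of_bdd (hMmeas f s).aestronglyMeasurable (Real.exp s)
          (fun ω => by
            rw [abs_of_pos (Real.exp_pos _)]
            exact Real.exp_le_exp.mpr (hSum_le f s ω))
      calc (∫ ω, Real.exp (∑ i ∈ Finset.Icc 1 (s + 1), (c * G f i ω - Z f i ω)) ∂μ)
          = ∫ ω, Cf ω * Y ω ∂μ := by
            apply integral_congr_ae
            exact Filter.Eventually.of_forall hsplit
      _ = ∫ ω, (μ[fun ω => Cf ω * Y ω|ℋ s]) ω ∂μ := (integral_condExp (ℋ.le s)).symm
      _ = ∫ ω, Cf ω * (μ[Y|ℋ s]) ω ∂μ := integral_congr_ae hpull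
      _ ≤ ∫ ω, Real.exp (∑ i ∈ Finset.Icc 1 s, (c * G f i ω - Z f i ω)) ∂μ :=
            integral_mono_ae hintCcond hintM hcondbd
      _ ≤ 1 := ih
  
  -- θ and the bad events
  set θ : ℕ → ℝ := fun t => Real.log (2 * (Fintype.card F : ℝ) * (t : ℝ) ^ 3 / δ) with hθ
  have hRpos : ∀ t : ℕ, 1 ≤ t → 0 < 2 * (Fintype.card F : ℝ) * (t : ℝ) ^ 3 / δ := by
    intro t ht
    have ht1 : (1 : ℝ) ≤ (t : ℝ) := by exact_mod_cast ht
    positivity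
  have hR1 : ∀ t : ℕ, 1 ≤ t → 1 ≤ 2 * (Fintype.card F : ℝ) * (t : ℝ) ^ 3 / δ := by
    intro t ht
    have ht1 : (1 : ℝ) ≤ (t : ℝ) := by exact_mod_cast ht
    rw [le_div_iff₀ hδ0]
    have ht3 : (1 : ℝ) ≤ (t : ℝ) ^ 3 := one_le_pow₀ ht1
    nlinarith
  have hθ0 : ∀ t : ℕ, 1 ≤ t → 0 ≤ θ t := fun t ht => Real.log_nonneg (hR1 t ht)
  have hexpθ : ∀ t : ℕ, 1 ≤ t →
      Real.exp (θ t) = 2 * (Fintype.card F : ℝ) * (t : ℝ) ^ 3 / δ :=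
    fun t ht => Real.exp_log (hRpos t ht)
  set Bset : F → ℕ → Set Ω := fun f t =>
    {ω | Real.exp (θ t) ≤ Real.exp (∑ i ∈ Finset.Icc 1 (t - 1), (c * G f i ω - Z f i ω))}
    with hBset
  have hBbd : ∀ (f : F) (t : ℕ), 1 ≤ t →
      μ (Bset f t) ≤ ENNReal.ofReal (δ / (2 * (Fintype.card F : ℝ) * (t : ℝ) ^ 3)) := by
    intro f t ht
    have hmar := mul_meas_ge_le_integral_of_nonneg
      (μ := μ) (f := fun ω => Real.exp (∑ i ∈ Finset.Icc 1 (t - 1), (c * G f i ω - Z f i ω)))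
      (Filter.Eventually.of_forall fun ω => (Real.exp_pos _).le)
      (integrable_of_bdd (hMmeas f (t - 1)).aestronglyMeasurable (Real.exp ((t - 1 : ℕ) : ℝ))
        (fun ω => by
          rw [abs_of_pos (Real.exp_pos _)]
          exact Real.exp_le_exp.mpr (hSum_le f (t - 1) ω)))
      (Real.exp (θ t))
    have hmar2 : Real.exp (θ t) * (μ (Bset f t)).toReal ≤ 1 :=
      le_trans hmar (hMint f (t - 1))
    have hEpos : 0 < Real.exp (θ t) := Real.exp_pos _
    have htoReal : (μ (Bset f t)).toReal ≤ δ / (2 * (Fintype.card F : ℝ) * (t : ℝ) ^ 3) := by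
      rw [hexpθ t ht] at hmar2
      have h3 : (μ (Bset f t)).toReal * (2 * (Fintype.card F : ℝ) * (t : ℝ) ^ 3 / δ) ≤ 1 := by
        nlinarith
      have h4 := (le_div_iff₀ (hRpos t ht)).mpr h3
      rwa [one_div_div] at h4
    calc μ (Bset f t) = ENNReal.ofReal ((μ (Bset f t)).toReal) := by
          rw [ENNReal.ofReal_toReal (measure_ne_top μ _)]
    _ ≤ ENNReal.ofReal (δ / (2 * (Fintype.card F : ℝ) * (t : ℝ) ^ 3)) :=
          ENNReal.ofReal_le_ofReal htoReal
  set Bad : Set Ω := ⋃ t : ℕ, ⋃ f : F, (if 2 ≤ t then Bset f t else ∅) with hBad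
  set rt : ℕ → ℝ := fun t => if 2 ≤ t then 1 / (t : ℝ) ^ 3 else 0 with hrt
  have hrt_nn : ∀ t, 0 ≤ rt t := by
    intro t; rw [hrt]; dsimp only; positivity
  have hBadbd : μ Bad ≤ ENNReal.ofReal (δ / 2) := by
    have hstep : ∀ t : ℕ, μ (⋃ f : F, (if 2 ≤ t then Bset f t else ∅))
        ≤ ENNReal.ofReal (δ / 2 * rt t) := by
      intro t
      rcases Nat.lt_or_ge t 2 with ht | ht
      · have : ∀ f : F, (if 2 ≤ t then Bset f t else ∅) = (∅ : Set Ω) := by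
          intro f; rw [if_neg (by omega)]
        simp [this]
      · have hite : ∀ f : F, (if 2 ≤ t then Bset f t else ∅) = Bset f t := by
          intro f; rw [if_pos ht]
        simp only [hite]
        calc μ (⋃ f : F, Bset f t) ≤ ∑ f : F, μ (Bset f t) :=
              measure_iUnion_fintype_le μ _
        _ ≤ ∑ _f : F, ENNReal.ofReal (δ / (2 * (Fintype.card F : ℝ) * (t : ℝ) ^ 3)) :=
              Finset.sum_le_sum fun f _ => hBbd f t (by omega)
        _ = (Fintype.card F : ℕ) •
              ENNReal.ofReal (δ / (2 * (Fintype.card F : ℝ) * (t : ℝ) ^ 3)) := by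
              rw [Finset.sum_const, Finset.card_univ]
        _ = ENNReal.ofReal ((Fintype.card F : ℝ) *
              (δ / (2 * (Fintype.card F : ℝ) * (t : ℝ) ^ 3))) := by
              rw [nsmul_eq_mul, ← ENNReal.ofReal_natCast (Fintype.card F),
                ← ENNReal.ofReal_mul (Nat.cast_nonneg _)]
        _ = ENNReal.ofReal (δ / 2 * rt t) := by
              congr 1
              have htpos : (0 : ℝ) < (t : ℝ) := by
                have h2 : (2 : ℝ) ≤ (t : ℝ) := by exact_mod_cast ht
                linarith
              have hcF : (0 : ℝ) < (Fintype.card F : ℝ) := by linarith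
              have hrteq : rt t = 1 / (t : ℝ) ^ 3 := by rw [hrt]; dsimp only; rw [if_pos ht]
              rw [hrteq]
              field_simp
    have hrt_le : ∀ t : ℕ, rt t ≤ 1 / (t : ℝ) ^ 3 := by
      intro t
      rw [hrt]; dsimp only
      split
      · exact le_rfl
      · positivity
    have hsummable : Summable (fun t => δ / 2 * rt t) :=
      Summable.mul_left _ (Summable.of_nonneg_of_le hrt_nn hrt_le
        (Real.summable_one_div_nat_pow.mpr (by norm_num)))
    calc μ Bad ≤ ∑' t : ℕ, μ (⋃ f : F, (if 2 ≤ t then Bset f t else ∅)) :=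
          measure_iUnion_le _
    _ ≤ ∑' t : ℕ, ENNReal.ofReal (δ / 2 * rt t) := ENNReal.tsum_le_tsum hstep
    _ = ENNReal.ofReal (∑' t : ℕ, δ / 2 * rt t) :=
          (ENNReal.ofReal_tsum_of_nonneg
            (fun t => mul_nonneg (by linarith) (hrt_nn t)) hsummable).symm
    _ ≤ ENNReal.ofReal (δ / 2) := by
          apply ENNReal.ofReal_le_ofReal
          rw [tsum_mul_left]
          have h5 : ∑' t, rt t ≤ 1 := by rw [hrt]; exact tsum_rt_le_one
          calc δ / 2 * ∑' t, rt t ≤ δ / 2 * 1 :=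
                mul_le_mul_of_nonneg_left h5 (by linarith)
          _ = δ / 2 := mul_one _
  
  -- the pointwise (per-ω) deterministic claim
  have main : ∀ ω : Ω,
      (∀ t : ℕ, ∑ i ∈ Finset.Icc 1 (t - 1),
          (u (fhat t ω) (xseq i ω) (aseq i ω) - u fstar (xseq i ω) (aseq i ω)) ^ 2 ≤
        2 * L ^ 2 * Est t) → ω ∉ Bad →
      ∀ t : ℕ, K < t →
        ∀ π' : X → Measure A, Measurable π' → (∀ x, IsProbabilityMeasure (π' x)) →
          |∫ x, (∫ a, (u (fhat t ω) x a - u fstar x a) ∂(π' x)) ∂Q| ≤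
            Real.sqrt (∫ x, (∫ a,
                (∫ cf : Fin (t - 1) → A,
                  (1 / ∑ i : Fin (t - 1), if a = cf i then (1 : ℝ) else 0)
                  ∂(Measure.pi fun i : Fin (t - 1) => π (i.1 + 1) ω x))
                ∂(π' x)) ∂Q)
              * Real.sqrt (68 * Real.log (2 * (Fintype.card F : ℝ) * (t : ℝ) ^ 3 / δ)
                  + 4 * L ^ 2 * Est t) := by
    intro ω hω1 hω2 t ht π' hπ'm hπ'p
    haveI : ∀ x, IsProbabilityMeasure (π' x) := hπ'p
    -- nonemptiness and basic numerology
    have hXne : Nonempty X := by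
      by_contra hne
      rw [not_nonempty_iff] at hne
      have h0 : Q Set.univ = 1 := measure_univ
      rw [Set.univ_eq_empty_iff.mpr hne, measure_empty] at h0
      exact zero_ne_one h0
    have hAne : Nonempty A := by
      by_contra hne
      rw [not_nonempty_iff] at hne
      obtain ⟨x0⟩ := hXne
      have h0 : π' x0 Set.univ = 1 := measure_univ
      rw [Set.univ_eq_empty_iff.mpr hne, measure_empty] at h0
      exact zero_ne_one h0
    have hK1 : 1 ≤ K := by
      have := Fintype.card_pos (α := A)
      omega
    have ht2 : 2 ≤ t := by omega
    set n := t - 1 with hn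
    have hn1 : 1 ≤ n := by omega
    have hKn : K ≤ n := by omega
    haveI hpiprob : ∀ (x : X) (i : Fin n), IsProbabilityMeasure (π (i.1 + 1) ω x) :=
      fun x i => hπprob _ ω x
    haveI hsingpi : MeasurableSingletonClass (Fin n → A) :=
      ⟨fun cf => by
        rw [← Set.univ_pi_singleton]
        exact MeasurableSet.univ_pi fun i => measurableSet_singleton _⟩
    haveI hPprob : ∀ x : X,
        IsProbabilityMeasure (Measure.pi fun i : Fin n => π (i.1 + 1) ω x) :=
      fun x => inferInstance
    set f0 := fhat t ω with hf0
    set w : X → A → ℝ := fun x b => (π' x {b}).toReal with hw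
    set q : X → (Fin n → A) → ℝ :=
      fun x cf => ((Measure.pi fun i : Fin n => π (i.1 + 1) ω x) {cf}).toReal with hq
    set Nf : A → (Fin n → A) → ℝ :=
      fun a cf => ∑ i : Fin n, if a = cf i then (1 : ℝ) else 0 with hNf
    set px : X → ℝ := fun x => ∫ a, D f0 x a ∂(π' x) with hpx
    set Sx : X → ℝ := fun x => ∫ a,
        (∫ cf : Fin n → A, (1 / Nf a cf)
          ∂(Measure.pi fun i : Fin n => π (i.1 + 1) ω x)) ∂(π' x) with hSx
    set Tx : X → ℝ := fun x => ∑ i : Fin n, ∫ b, (D f0 x b) ^ 2 ∂(π (i.1 + 1) ω x) with hTx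
    -- basic facts about w, q, Nf
    have hw0 : ∀ x b, 0 ≤ w x b := fun x b => ENNReal.toReal_nonneg
    have hw1 : ∀ x b, w x b ≤ 1 := by
      intro x b
      have h := prob_le_one (μ := π' x) (s := {b})
      have h2 := ENNReal.toReal_mono (by simp) h
      simpa [hw] using h2
    have hq0 : ∀ x cf, 0 ≤ q x cf := fun x cf => ENNReal.toReal_nonneg
    have hqprod : ∀ x cf, q x cf = ∏ i : Fin n, (π (i.1 + 1) ω x {cf i}).toReal := by
      intro x cf
      rw [hq]
      dsimp only
      rw [← Set.univ_pi_singleton cf, Measure.pi_pi, ENNReal.toReal_prod]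
    have hqmeas : ∀ cf, Measurable fun x => q x cf := by
      intro cf
      have h : (fun x => q x cf) = fun x => ∏ i : Fin n, (π (i.1 + 1) ω x {cf i}).toReal :=
        funext fun x => hqprod x cf
      rw [h]
      exact Finset.measurable_prod _ fun i _ => hπsect_w (i.1 + 1) ω (cf i)
    have hwmeas : ∀ b, Measurable fun x => w x b := fun b =>
      ((Measure.measurable_coe (measurableSet_singleton b)).comp hπ'm).ennreal_toReal
    have hN0 : ∀ a cf, 0 ≤ Nf a cf := by
      intro a cf
      rw [hNf]
      exact Finset.sum_nonneg fun i _ => by split <;> norm_num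
    have hNalt : ∀ (a : A) (cf : Fin n → A), Nf a cf = 0 ∨ 1 ≤ Nf a cf := by
      intro a cf
      by_cases h : ∃ i, a = cf i
      · right
        obtain ⟨i0, hi0⟩ := h
        have hle := Finset.single_le_sum
          (f := fun i : Fin n => if a = cf i then (1 : ℝ) else 0)
          (fun i _ => by by_cases hh : a = cf i <;> simp [hh]) (Finset.mem_univ i0)
        have h1 : (fun i : Fin n => if a = cf i then (1 : ℝ) else 0) i0 = 1 := by
          simp [hi0]
        rw [show (if a = cf i0 then (1 : ℝ) else 0) = 1 from h1] at hle
        rw [hNf]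
        exact hle
      · left
        rw [hNf]
        dsimp only
        apply Finset.sum_eq_zero
        intro i _
        rw [if_neg]
        push_neg at h
        exact h i
    have hinv0 : ∀ a cf, 0 ≤ 1 / Nf a cf := fun a cf => by positivity
    have hinv1 : ∀ a cf, 1 / Nf a cf ≤ 1 := by
      intro a cf
      rcases hNalt a cf with h | h
      · rw [h]; norm_num
      · rw [div_le_one (by linarith)]; exact h
    -- if q x cf ≠ 0 then N ≥ 1 for every action
    have hsupp : ∀ x cf, q x cf ≠ 0 → ∀ a : A, 1 ≤ Nf a cf := by
      intro x cf hq0' a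
      obtain ⟨j, hjmem, hja⟩ := henum a
      have hjmem' := hjmem
      rw [Finset.mem_Icc] at hjmem'
      have hjn : j - 1 < n := by omega
      set i0 : Fin n := ⟨j - 1, hjn⟩ with hi0def
      have hidx : i0.1 + 1 = j := by
        rw [hi0def]
        show j - 1 + 1 = j
        omega
      have hcf : cf i0 = a := by
        by_contra hne
        apply hq0'
        rw [hqprod x cf]
        have hzero : π (i0.1 + 1) ω x {cf i0} = 0 := by
          rw [hidx, (hdet j hjmem).1 ω x]
          rw [Measure.dirac_apply' _ (measurableSet_singleton _)]
          have hnm : act j ∉ ({cf i0} : Set A) := by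
            simp only [Set.mem_singleton_iff]
            rw [hja]
            intro hcontr
            exact hne hcontr.symm
          simp [Set.indicator, hnm]
        refine Finset.prod_eq_zero (Finset.mem_univ i0) ?_
        show (π (i0.1 + 1) ω x {cf i0}).toReal = 0
        rw [hzero]
        simp
      have hle := Finset.single_le_sum
        (f := fun i : Fin n => if a = cf i then (1 : ℝ) else 0)
        (fun i _ => by by_cases hh : a = cf i <;> simp [hh]) (Finset.mem_univ i0)
      have h1 : (fun i : Fin n => if a = cf i then (1 : ℝ) else 0) i0 = 1 := by
        simp [hcf]
      rw [show (if a = cf i0 then (1 : ℝ) else 0) = 1 from h1] at hle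
      rw [hNf]
      exact hle
    -- sum representations
    have hsumq1 : ∀ x, ∑ cf : Fin n → A, q x cf = 1 := by
      intro x
      simp only [hq]
      exact sum_toReal_measure_singleton' _
    have hpx_sum : ∀ x, px x = ∑ b : A, w x b * D f0 x b := by
      intro x
      simp only [hpx]
      rw [integral_fintype_eq_sum]
    have hSin_eq : ∀ x (a : A),
        (∫ cf : Fin n → A, (1 / Nf a cf)
          ∂(Measure.pi fun i : Fin n => π (i.1 + 1) ω x))
        = ∑ cf : Fin n → A, q x cf * (1 / Nf a cf) := by
      intro x a
      simp only [hq]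
      exact integral_fintype_eq_sum _ _
    have hDameas : ∀ (f : F) x, Measurable fun b : A => D f x b := fun f x =>
      (hDmeas f).comp (measurable_const.prodMk measurable_id)
    -- pointwise Cauchy-Schwarz
    have claim1 : ∀ x, |px x| ≤ Real.sqrt (Sx x) * Real.sqrt (Tx x) := by
      intro x
      set r : A × (Fin n → A) → ℝ := fun p => w x p.1 * q x p.2 with hr
      have hr0 : ∀ p, 0 ≤ r p := fun p => mul_nonneg (hw0 x p.1) (hq0 x p.2)
      have hpx2 : px x = ∑ p : A × (Fin n → A), r p * D f0 x p.1 := by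
        rw [hpx_sum x, Fintype.sum_prod_type]
        refine Finset.sum_congr rfl fun b _ => ?_
        have h : ∑ cf : Fin n → A, r (b, cf) * D f0 x b
            = (∑ cf : Fin n → A, q x cf) * (w x b * D f0 x b) := by
          rw [Finset.sum_mul]
          refine Finset.sum_congr rfl fun cf _ => ?_
          rw [hr]
          ring
        rw [h, hsumq1 x, one_mul]
      set F1 : A × (Fin n → A) → ℝ := fun p => Real.sqrt (r p * (1 / Nf p.1 p.2)) with hF1
      set F2 : A × (Fin n → A) → ℝ :=
        fun p => Real.sqrt (r p * Nf p.1 p.2) * D f0 x p.1 with hF2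
      have hterm : ∀ p : A × (Fin n → A), r p * D f0 x p.1 = F1 p * F2 p := by
        intro p
        rcases eq_or_ne (q x p.2) 0 with h0 | h0
        · have hrp : r p = 0 := by rw [hr]; dsimp only; rw [h0, mul_zero]
          rw [hF1, hF2]
          dsimp only
          rw [hrp]
          simp
        · have hN1 : 1 ≤ Nf p.1 p.2 := hsupp x p.2 h0 p.1
          have hkey2 : F1 p * Real.sqrt (r p * Nf p.1 p.2) = r p := by
            rw [hF1]
            dsimp only
            rw [← Real.sqrt_mul (mul_nonneg (hr0 p) (hinv0 _ _))]
            have heq : r p * (1 / Nf p.1 p.2) * (r p * Nf p.1 p.2) = (r p) ^ 2 := by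
              field_simp
            rw [heq, Real.sqrt_sq (hr0 p)]
          rw [hF2]
          dsimp only
          rw [← mul_assoc, hkey2]
      have hCS := Finset.sum_mul_sq_le_sq_mul_sq Finset.univ F1 F2
      have hSx_sum : Sx x = ∑ p : A × (Fin n → A), r p * (1 / Nf p.1 p.2) := by
        simp only [hSx]
        rw [integral_fintype_eq_sum, Fintype.sum_prod_type]
        refine Finset.sum_congr rfl fun b _ => ?_
        rw [hSin_eq x b, Finset.mul_sum]
        refine Finset.sum_congr rfl fun cf _ => ?_
        rw [hr, hw]
        dsimp only
        ring
      have hF1sq : ∑ p : A × (Fin n → A), F1 p ^ 2 = Sx x := by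
        rw [hSx_sum]
        refine Finset.sum_congr rfl fun p _ => ?_
        rw [hF1]
        dsimp only
        exact Real.sq_sqrt (mul_nonneg (hr0 p) (hinv0 _ _))
      have hF2sq : ∑ p : A × (Fin n → A), F2 p ^ 2 ≤ Tx x := by
        have hstep1 : ∀ p : A × (Fin n → A),
            F2 p ^ 2 = ∑ i : Fin n,
              r p * (if p.1 = p.2 i then (1 : ℝ) else 0) * (D f0 x p.1) ^ 2 := by
          intro p
          rw [hF2]
          dsimp only
          rw [mul_pow, Real.sq_sqrt (mul_nonneg (hr0 p) (hN0 _ _)), hNf]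
          dsimp only
          rw [Finset.mul_sum, Finset.sum_mul]
        calc ∑ p : A × (Fin n → A), F2 p ^ 2
            = ∑ i : Fin n, ∑ p : A × (Fin n → A),
                r p * (if p.1 = p.2 i then (1 : ℝ) else 0) * (D f0 x p.1) ^ 2 := by
              rw [← Finset.sum_comm]
              exact Finset.sum_congr rfl fun p _ => hstep1 p
        _ ≤ ∑ i : Fin n, ∫ b, (D f0 x b) ^ 2 ∂(π (i.1 + 1) ω x) := by
              refine Finset.sum_le_sum fun i _ => ?_
              have hinner : ∀ cf : Fin n → A,
                  (∑ b : A, r (b, cf) * (if b = cf i then (1 : ℝ) else 0) * (D f0 x b) ^ 2)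
                  ≤ q x cf * (D f0 x (cf i)) ^ 2 := by
                intro cf
                have hsingle : (∑ b : A,
                    r (b, cf) * (if b = cf i then (1 : ℝ) else 0) * (D f0 x b) ^ 2)
                    = r (cf i, cf) * (D f0 x (cf i)) ^ 2 := by
                  rw [Finset.sum_eq_single (cf i)]
                  · rw [if_pos rfl, mul_one]
                  · intro b _ hb
                    rw [if_neg hb]
                    ring
                  · intro hmem
                    exact absurd (Finset.mem_univ _) hmem
                rw [hsingle, hr]
                dsimp only
                have hfact : 0 ≤ (1 - w x (cf i)) * (q x cf * (D f0 x (cf i)) ^ 2) :=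
                  mul_nonneg (by linarith [hw1 x (cf i)])
                    (mul_nonneg (hq0 x cf) (sq_nonneg _))
                nlinarith [hfact]
              calc (∑ p : A × (Fin n → A),
                    r p * (if p.1 = p.2 i then (1 : ℝ) else 0) * (D f0 x p.1) ^ 2)
                  = ∑ cf : Fin n → A, ∑ b : A,
                      r (b, cf) * (if b = cf i then (1 : ℝ) else 0) * (D f0 x b) ^ 2 := by
                    rw [Fintype.sum_prod_type]
                    exact Finset.sum_comm
              _ ≤ ∑ cf : Fin n → A, q x cf * (D f0 x (cf i)) ^ 2 :=
                    Finset.sum_le_sum fun cf _ => hinner cf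
              _ = ∫ cf : Fin n → A, (D f0 x (cf i)) ^ 2
                    ∂(Measure.pi fun i : Fin n => π (i.1 + 1) ω x) := by
                    rw [integral_fintype_eq_sum]
              _ = ∫ b, (D f0 x b) ^ 2 ∂(π (i.1 + 1) ω x) :=
                    integral_eval_pi _ i ((hDameas f0 x).pow_const 2)
        _ = Tx x := by rw [hTx]
      have hSx0 : 0 ≤ Sx x := by
        rw [← hF1sq]
        exact Finset.sum_nonneg fun p _ => sq_nonneg _
      have hpxsq : px x ^ 2 ≤ Sx x * Tx x := by
        rw [hpx2]
        calc (∑ p : A × (Fin n → A), r p * D f0 x p.1) ^ 2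
            = (∑ p : A × (Fin n → A), F1 p * F2 p) ^ 2 := by
              rw [Finset.sum_congr rfl fun p _ => hterm p]
        _ ≤ (∑ p : A × (Fin n → A), F1 p ^ 2) * ∑ p : A × (Fin n → A), F2 p ^ 2 := hCS
        _ ≤ Sx x * Tx x := by
              rw [hF1sq]
              exact mul_le_mul_of_nonneg_left hF2sq hSx0
      calc |px x| = Real.sqrt (px x ^ 2) := (Real.sqrt_sq_eq_abs _).symm
      _ ≤ Real.sqrt (Sx x * Tx x) := Real.sqrt_le_sqrt hpxsq
      _ = Real.sqrt (Sx x) * Real.sqrt (Tx x) := Real.sqrt_mul hSx0 _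
    -- bounds and measurability in x
    have hSx0 : ∀ x, 0 ≤ Sx x := by
      intro x
      simp only [hSx]
      refine integral_nonneg fun a => integral_nonneg fun cf => hinv0 a cf
    have hSx1 : ∀ x, Sx x ≤ 1 := by
      intro x
      simp only [hSx]
      calc (∫ a, (∫ cf : Fin n → A, (1 / Nf a cf)
              ∂(Measure.pi fun i : Fin n => π (i.1 + 1) ω x)) ∂(π' x))
          ≤ ∫ _, (1 : ℝ) ∂(π' x) := by
            refine integral_mono .of_finite .of_finite fun a => ?_
            calc (∫ cf : Fin n → A, (1 / Nf a cf)
                    ∂(Measure.pi fun i : Fin n => π (i.1 + 1) ω x))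
                ≤ ∫ _, (1 : ℝ) ∂(Measure.pi fun i : Fin n => π (i.1 + 1) ω x) :=
                  integral_mono .of_finite .of_finite fun cf => hinv1 a cf
            _ = 1 := by simp
      _ = 1 := by simp
    have hTin0 : ∀ x (i : Fin n), 0 ≤ ∫ b, (D f0 x b) ^ 2 ∂(π (i.1 + 1) ω x) :=
      fun x i => integral_nonneg fun b => sq_nonneg _
    have hTin1 : ∀ x (i : Fin n), (∫ b, (D f0 x b) ^ 2 ∂(π (i.1 + 1) ω x)) ≤ 1 :=
      fun x i => hGin1 f0 (i.1 + 1) ω x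
    have hTx0 : ∀ x, 0 ≤ Tx x := by
      intro x
      rw [hTx]
      exact Finset.sum_nonneg fun i _ => hTin0 x i
    have hTx1 : ∀ x, Tx x ≤ n := by
      intro x
      rw [hTx]
      calc (∑ i : Fin n, ∫ b, (D f0 x b) ^ 2 ∂(π (i.1 + 1) ω x))
          ≤ ∑ _i : Fin n, (1 : ℝ) := Finset.sum_le_sum fun i _ => hTin1 x i
      _ = n := by simp
    have hpxmeas : Measurable px := by
      rw [hpx]
      exact measurable_integral_fintype_param hπ'p hπ'm (fun b => hDxmeas f0 b)
    have hSin_meas : ∀ a : A, Measurable fun x =>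
        ∫ cf : Fin n → A, (1 / Nf a cf)
          ∂(Measure.pi fun i : Fin n => π (i.1 + 1) ω x) := by
      intro a
      have h : (fun x => ∫ cf : Fin n → A, (1 / Nf a cf)
            ∂(Measure.pi fun i : Fin n => π (i.1 + 1) ω x))
          = fun x => ∑ cf : Fin n → A, q x cf * (1 / Nf a cf) :=
        funext fun x => hSin_eq x a
      rw [h]
      exact Finset.measurable_sum _ fun cf _ => (hqmeas cf).mul_const _
    have hSxmeas : Measurable Sx := by
      rw [hSx]
      exact measurable_integral_fintype_param hπ'p hπ'm hSin_meas
    have hTxmeas : Measurable Tx := by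
      rw [hTx]
      exact Finset.measurable_sum _ fun i _ =>
        measurable_integral_fintype_param (fun x => hπprob _ ω x) (hπsect (i.1 + 1) ω)
          (fun b => (hDxmeas f0 b).pow_const 2)
    have hpx1 : ∀ x, |px x| ≤ 1 := by
      intro x
      have h1 : |px x| ≤ ∫ a, |D f0 x a| ∂(π' x) := by
        have := norm_integral_le_integral_norm (μ := π' x) (fun a => D f0 x a)
        simpa [Real.norm_eq_abs, hpx] using this
      calc |px x| ≤ ∫ a, |D f0 x a| ∂(π' x) := h1
      _ ≤ ∫ _, (1 : ℝ) ∂(π' x) := integral_mono .of_finite .of_finite fun a => hDabs f0 x a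
      _ = 1 := by simp
    have ipx : Integrable px Q := integrable_of_bdd hpxmeas.aestronglyMeasurable 1 hpx1
    have iSx : Integrable Sx Q := integrable_of_bdd hSxmeas.aestronglyMeasurable 1
      (fun x => abs_le.mpr ⟨by linarith [hSx0 x], hSx1 x⟩)
    have iTx : Integrable Tx Q := integrable_of_bdd hTxmeas.aestronglyMeasurable n
      (fun x => abs_le.mpr ⟨by linarith [hTx0 x, Nat.cast_nonneg (α := ℝ) n], hTx1 x⟩)
    have hsqmeas : Measurable fun x => Real.sqrt (Sx x) * Real.sqrt (Tx x) :=
      (Real.continuous_sqrt.measurable.comp hSxmeas).mul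
        (Real.continuous_sqrt.measurable.comp hTxmeas)
    have iProd : Integrable (fun x => Real.sqrt (Sx x) * Real.sqrt (Tx x)) Q := by
      refine integrable_of_bdd hsqmeas.aestronglyMeasurable (Real.sqrt n) (fun x => ?_)
      rw [abs_of_nonneg (mul_nonneg (Real.sqrt_nonneg _) (Real.sqrt_nonneg _))]
      calc Real.sqrt (Sx x) * Real.sqrt (Tx x) ≤ 1 * Real.sqrt n := by
            apply mul_le_mul _ (Real.sqrt_le_sqrt (hTx1 x)) (Real.sqrt_nonneg _) one_pos.le
            calc Real.sqrt (Sx x) ≤ Real.sqrt 1 := Real.sqrt_le_sqrt (hSx1 x)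
            _ = 1 := Real.sqrt_one
      _ = Real.sqrt n := one_mul _
    -- Cauchy-Schwarz over Q
    have claim2 : |∫ x, px x ∂Q| ≤
        Real.sqrt (∫ x, Sx x ∂Q) * Real.sqrt (∫ x, Tx x ∂Q) := by
      have hstep1 : |∫ x, px x ∂Q| ≤ ∫ x, |px x| ∂Q := by
        have := norm_integral_le_integral_norm (μ := Q) px
        simpa [Real.norm_eq_abs] using this
      have hstep2 : (∫ x, |px x| ∂Q) ≤ ∫ x, Real.sqrt (Sx x) * Real.sqrt (Tx x) ∂Q :=
        integral_mono ipx.abs iProd claim1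
      have hsq1 : (fun x => Real.sqrt (Sx x) ^ 2) = Sx := funext fun x => Real.sq_sqrt (hSx0 x)
      have hsq2 : (fun x => Real.sqrt (Tx x) ^ 2) = Tx := funext fun x => Real.sq_sqrt (hTx0 x)
      have hcs := integral_cs (μ := Q) (f := fun x => Real.sqrt (Sx x))
        (g := fun x => Real.sqrt (Tx x)) (by rw [hsq1]; exact iSx)
        (by rw [hsq2]; exact iTx) iProd
      rw [hsq1, hsq2] at hcs
      have hnn : 0 ≤ ∫ x, Real.sqrt (Sx x) * Real.sqrt (Tx x) ∂Q :=
        integral_nonneg fun x => mul_nonneg (Real.sqrt_nonneg _) (Real.sqrt_nonneg _)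
      have hstep3 : (∫ x, Real.sqrt (Sx x) * Real.sqrt (Tx x) ∂Q)
          ≤ Real.sqrt (∫ x, Sx x ∂Q) * Real.sqrt (∫ x, Tx x ∂Q) := by
        calc (∫ x, Real.sqrt (Sx x) * Real.sqrt (Tx x) ∂Q)
            = Real.sqrt ((∫ x, Real.sqrt (Sx x) * Real.sqrt (Tx x) ∂Q) ^ 2) :=
              (Real.sqrt_sq hnn).symm
        _ ≤ Real.sqrt ((∫ x, Sx x ∂Q) * ∫ x, Tx x ∂Q) := Real.sqrt_le_sqrt hcs
        _ = Real.sqrt (∫ x, Sx x ∂Q) * Real.sqrt (∫ x, Tx x ∂Q) :=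
              Real.sqrt_mul (integral_nonneg fun x => hSx0 x) _
      linarith
    -- the T-integral equals a sum of the G's
    have claim3 : ∫ x, Tx x ∂Q = ∑ j ∈ Finset.Icc 1 n, G f0 j ω := by
      have h1 : ∫ x, Tx x ∂Q
          = ∑ i : Fin n, ∫ x, (∫ b, (D f0 x b) ^ 2 ∂(π (i.1 + 1) ω x)) ∂Q := by
        simp only [hTx]
        rw [integral_finset_sum Finset.univ (fun i _ =>
          integrable_of_bdd (measurable_integral_fintype_param (fun x => hπprob _ ω x)
            (hπsect (i.1 + 1) ω) (fun b => (hDxmeas f0 b).pow_const 2)).aestronglyMeasurable 1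
            (fun x => abs_le.mpr ⟨by linarith [hTin0 x i], hTin1 x i⟩))]
      rw [h1]
      have h2 : ∀ i : Fin n,
          (∫ x, (∫ b, (D f0 x b) ^ 2 ∂(π (i.1 + 1) ω x)) ∂Q) = G f0 (i.1 + 1) ω := by
        intro i
        rw [hG]
      rw [Finset.sum_congr rfl fun i _ => h2 i]
      rw [sum_Icc_one_eq_range n (fun j => G f0 j ω)]
      exact Fin.sum_univ_eq_sum_range (fun j => G f0 (j + 1) ω) n
    -- the good event bound
    have hnotB : ω ∉ Bset f0 t := by
      intro hmem
      apply hω2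
      rw [hBad]
      refine Set.mem_iUnion.mpr ⟨t, Set.mem_iUnion.mpr ⟨f0, ?_⟩⟩
      rw [if_pos ht2]
      exact hmem
    have hlt : ∑ i ∈ Finset.Icc 1 n, (c * G f0 i ω - Z f0 i ω) < θ t := by
      by_contra hge
      push_neg at hge
      apply hnotB
      rw [hBset]
      exact Real.exp_le_exp.mpr hge
    have hZeq : ∀ i, Z f0 i ω
        = (u (fhat t ω) (xseq i ω) (aseq i ω) - u fstar (xseq i ω) (aseq i ω)) ^ 2 := by
      intro i
      simp only [hZ, hD, hf0]
    have hZsum : ∑ i ∈ Finset.Icc 1 n, Z f0 i ω ≤ 2 * L ^ 2 * Est t := by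
      rw [Finset.sum_congr rfl fun i _ => hZeq i]
      exact hω1 t
    have hθt0 : 0 ≤ θ t := hθ0 t (by omega)
    have hSG0 : 0 ≤ ∑ j ∈ Finset.Icc 1 n, G f0 j ω :=
      Finset.sum_nonneg fun j _ => hG0 f0 j ω
    have claim4 : ∑ j ∈ Finset.Icc 1 n, G f0 j ω
        ≤ 68 * Real.log (2 * (Fintype.card F : ℝ) * (t : ℝ) ^ 3 / δ) + 4 * L ^ 2 * Est t := by
      have hsplit2 : ∑ i ∈ Finset.Icc 1 n, (c * G f0 i ω - Z f0 i ω)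
          = c * (∑ j ∈ Finset.Icc 1 n, G f0 j ω) - ∑ i ∈ Finset.Icc 1 n, Z f0 i ω := by
        rw [Finset.sum_sub_distrib, Finset.mul_sum]
      rw [hsplit2] at hlt
      have hθeq : θ t = Real.log (2 * (Fintype.card F : ℝ) * (t : ℝ) ^ 3 / δ) := by
        rw [hθ]
      rw [hθeq] at hlt hθt0
      have hSZ0 : 0 ≤ ∑ i ∈ Finset.Icc 1 n, Z f0 i ω :=
        Finset.sum_nonneg fun i _ => hZ0 f0 i ω
      nlinarith
    -- conclusion
    have hgoalL : (∫ x, (∫ a, (u f0 x a - u fstar x a) ∂(π' x)) ∂Q)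
        = ∫ x, px x ∂Q := by
      refine integral_congr_ae (Filter.Eventually.of_forall fun x => ?_)
      simp only [hpx, hD]
    have hgoalS : (∫ x, (∫ a,
          (∫ cf : Fin n → A,
            (1 / ∑ i : Fin n, if a = cf i then (1 : ℝ) else 0)
            ∂(Measure.pi fun i : Fin n => π (i.1 + 1) ω x))
          ∂(π' x)) ∂Q) = ∫ x, Sx x ∂Q := by
      refine integral_congr_ae (Filter.Eventually.of_forall fun x => ?_)
      simp only [hSx, hNf]
    rw [hgoalL, hgoalS]
    calc |∫ x, px x ∂Q| ≤ Real.sqrt (∫ x, Sx x ∂Q) * Real.sqrt (∫ x, Tx x ∂Q) := claim2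
    _ ≤ Real.sqrt (∫ x, Sx x ∂Q)
          * Real.sqrt (68 * Real.log (2 * (Fintype.card F : ℝ) * (t : ℝ) ^ 3 / δ)
              + 4 * L ^ 2 * Est t) := by
        apply mul_le_mul_of_nonneg_left _ (Real.sqrt_nonneg _)
        apply Real.sqrt_le_sqrt
        rw [claim3]
        exact claim4
  -- assembly
  set Ekey : Set Ω := {ω | ∀ t : ℕ, ∑ i ∈ Finset.Icc 1 (t - 1),
      (u (fhat t ω) (xseq i ω) (aseq i ω) - u fstar (xseq i ω) (aseq i ω)) ^ 2 ≤
    2 * L ^ 2 * Est t} with hEkey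
  set Starget : Set Ω := {ω | ∀ t : ℕ, K < t →
      ∀ π' : X → Measure A, Measurable π' → (∀ x, IsProbabilityMeasure (π' x)) →
        |∫ x, (∫ a, (u (fhat t ω) x a - u fstar x a) ∂(π' x)) ∂Q| ≤
          Real.sqrt (∫ x, (∫ a,
              (∫ cf : Fin (t - 1) → A,
                (1 / ∑ i : Fin (t - 1), if a = cf i then (1 : ℝ) else 0)
                ∂(Measure.pi fun i : Fin (t - 1) => π (i.1 + 1) ω x))
              ∂(π' x)) ∂Q)
            * Real.sqrt (68 * Real.log (2 * (Fintype.card F : ℝ) * (t : ℝ) ^ 3 / δ)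
                + 4 * L ^ 2 * Est t)} with hStarget
  have hsubset : Ekey ∩ Badᶜ ⊆ Starget := by
    rintro ω ⟨hω1, hω2⟩
    intro t ht π' hπ'm hπ'p
    exact main ω hω1 hω2 t ht π' hπ'm hπ'p
  have hfin : ENNReal.ofReal (1 - δ / 2) ≤ μ Starget + ENNReal.ofReal (δ / 2) := by
    calc ENNReal.ofReal (1 - δ / 2) ≤ μ Ekey := hkey
    _ ≤ μ (Ekey ∩ Badᶜ) + μ (Ekey \ Badᶜ) := measure_le_inter_add_diff μ Ekey Badᶜ
    _ ≤ μ Starget + μ Bad := by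
        refine add_le_add (measure_mono hsubset) (measure_mono ?_)
        intro ω hω
        rw [Set.mem_diff] at hω
        exact not_not.mp hω.2
    _ ≤ μ Starget + ENNReal.ofReal (δ / 2) := add_le_add le_rfl hBadbd
  have hsplitδ : ENNReal.ofReal (1 - δ / 2)
      = ENNReal.ofReal (1 - δ) + ENNReal.ofReal (δ / 2) := by
    rw [← ENNReal.ofReal_add (by linarith) (by linarith)]
    congr 1
    ring
  rw [hsplitδ] at hfin
  exact (ENNReal.add_le_add_iff_right ENNReal.ofReal_ne_top).mp hfin
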